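/- Every element of G = C_m ≀ S_n has a unique representation as a product t_{n-1}^{k_{n-1}} t_{n-2}^{k_{n-2}} ... t_1^{k_1} t_0^{k_0} with 0 ≤ k_i < m(i+1) for all 0 ≤ i ≤ n-1, where t_i := s_i s_{i-1} ... s_1 s_0. -/

import Mathlib

open Finset

@[ext]
structure GenPerm (m n : ℕ) where
  σ : Equiv.Perm (Fin n)
  c : Fin n → ZMod m
deriving DecidableEq

namespace GenPerm

variable {m n : ℕ}

instance [NeZero m] : Fintype (GenPerm m n) :=
  Fintype.ofEquiv (Equiv.Perm (Fin n) × (Fin n → ZMod m))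
    { toFun := fun p => ⟨p.1, p.2⟩
      invFun := fun g => (g.σ, g.c)
      left_inv := fun p => rfl
      right_inv := fun g => rfl }

instance : Mul (GenPerm m n) := ⟨fun g h => ⟨g.σ * h.σ, fun j => g.c (h.σ j) + h.c j⟩⟩
instance : One (GenPerm m n) := ⟨⟨1, 0⟩⟩
instance : Inv (GenPerm m n) := ⟨fun g => ⟨g.σ⁻¹, fun j => - g.c (g.σ⁻¹ j)⟩⟩

@[simp] lemma mul_σ (g h : GenPerm m n) : (g * h).σ = g.σ * h.σ := rfl
@[simp] lemma mul_c (g h : GenPerm m n) (j : Fin n) : (g * h).c j = g.c (h.σ j) + h.c j := rfl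
@[simp] lemma one_σ : (1 : GenPerm m n).σ = 1 := rfl
@[simp] lemma one_c (j : Fin n) : (1 : GenPerm m n).c j = 0 := rfl
@[simp] lemma inv_σ (g : GenPerm m n) : (g⁻¹).σ = g.σ⁻¹ := rfl
@[simp] lemma inv_c (g : GenPerm m n) (j : Fin n) : (g⁻¹).c j = - g.c (g.σ⁻¹ j) := rfl

instance : Group (GenPerm m n) where
  mul_assoc a b c := by
    ext j
    · simp [mul_assoc]
    · simp [add_assoc]
  one_mul a := by
    ext j
    · simp
    · simp
  mul_one a := by
    ext j
    · simp
    · simp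
  inv_mul_cancel a := by
    ext j
    · simp
    · simp

/-- The generator `s i`: `s 0` multiplies the first letter's phase by `ω`;
for `1 ≤ i < n`, `s i` swaps positions `i` and `i+1` (1-indexed), i.e. `i-1` and `i`
(0-indexed). -/
def s (i : ℕ) : GenPerm m n :=
  if h : i < n then
    if h0 : i = 0 then ⟨1, fun j => if j = ⟨0, by omega⟩ then 1 else 0⟩
    else ⟨Equiv.swap ⟨i - 1, by omega⟩ ⟨i, h⟩, 0⟩
  else 1

/-- `t i = s i * s (i-1) * ⋯ * s 1 * s 0`. -/
def t (i : ℕ) : GenPerm m n := ((List.range (i + 1)).map (fun j => (s (i - j) : GenPerm m n))).prod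

/-- `rep k = t (n-1) ^ k (n-1) * ⋯ * t 0 ^ k 0`. -/
def rep (k : Fin n → ℕ) : GenPerm m n :=
  (List.ofFn (fun i : Fin n => (t (i : ℕ) : GenPerm m n) ^ k i)).reverse.prod

open scoped Classical in
/-- The flag major index: the sum of the exponents in the canonical representation
`π = t (n-1) ^ k (n-1) * ⋯ * t 0 ^ k 0` with `0 ≤ k i < m * (i+1)`. -/
noncomputable def flagMajor (π : GenPerm m n) : ℕ :=
  if h : ∃ k : Fin n → ℕ, (∀ i : Fin n, k i < m * ((i : ℕ) + 1)) ∧ π = rep k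
  then ∑ i, h.choose i else 0

/-- The major index of a generalized permutation with respect to the linear order
`1·ω^{m-1} < ⋯ < n·ω^{m-1} < ⋯ < 1·ω < ⋯ < n·ω < 1 < ⋯ < n`
(a 1-indexed descent at position `i` contributes `i`). -/
def majG (π : GenPerm m n) : ℕ :=
  ∑ i ∈ Finset.range n, if h : i + 1 < n then
    (if (π.c ⟨i, by omega⟩).val < (π.c ⟨i + 1, h⟩).val ∨
        (π.c ⟨i, by omega⟩ = π.c ⟨i + 1, h⟩ ∧ π.σ ⟨i + 1, h⟩ < π.σ ⟨i, by omega⟩)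
     then i + 1 else 0) else 0

/-- Coxeter length with respect to the generators `s 0, s 1, …, s (n-1)`. -/
noncomputable def len (π : GenPerm m n) : ℕ :=
  sInf {l | ∃ w : List (Fin n), w.length = l ∧ (w.map (fun i => (s (i : ℕ) : GenPerm m n))).prod = π}


/-! ### Auxiliary lemmas for the flag decomposition -/

lemma s_zero (h0 : 0 < n) :
    (s 0 : GenPerm m n) = ⟨1, fun j => if j = ⟨0, h0⟩ then 1 else 0⟩ := by
  simp [s, h0]

lemma s_succ {i : ℕ} (hi : i + 1 < n) :
    (s (i + 1) : GenPerm m n) = ⟨Equiv.swap ⟨i, by omega⟩ ⟨i + 1, hi⟩, 0⟩ := by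
  simp [s, hi]

lemma t_zero : (t 0 : GenPerm m n) = s 0 := by
  simp [t]

lemma t_succ (i : ℕ) : (t (i + 1) : GenPerm m n) = s (i + 1) * t i := by
  unfold t
  rw [List.range_succ_eq_map]
  simp only [List.map_cons, List.map_map, List.prod_cons, Nat.sub_zero]
  congr 2
  apply List.map_congr_left
  intro a _
  simp only [Function.comp_apply]
  congr 1
  omega

lemma t_sigma : ∀ {i : ℕ} (hi : i < n) (x : Fin n),
    (t i : GenPerm m n).σ x =
      if (x : ℕ) = 0 then ⟨i, hi⟩
      else if (x : ℕ) ≤ i then ⟨(x : ℕ) - 1, by omega⟩ else x := by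
  intro i
  induction i with
  | zero =>
    intro hi x
    rw [t_zero, s_zero hi]
    show (1 : Equiv.Perm (Fin n)) x = _
    rw [Equiv.Perm.one_apply]
    split_ifs with h1 h2
    · exact Fin.ext h1
    · omega
    · rfl
  | succ i ih =>
    intro hi x
    have hi' : i < n := by omega
    rw [t_succ, mul_σ, s_succ hi, Equiv.Perm.mul_apply, ih hi']
    by_cases h0 : (x : ℕ) = 0
    · rw [if_pos h0, if_pos h0]
      exact Equiv.swap_apply_left _ _
    · by_cases h1 : (x : ℕ) ≤ i
      · rw [if_neg h0, if_neg h0, if_pos h1, if_pos (by omega : (x : ℕ) ≤ i + 1)]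
        apply Equiv.swap_apply_of_ne_of_ne
        · intro h; have := congrArg Fin.val h; simp only [] at this; omega
        · intro h; have := congrArg Fin.val h; simp only [] at this; omega
      · by_cases h2 : (x : ℕ) = i + 1
        · rw [if_neg h0, if_neg h0, if_neg h1, if_pos (by omega : (x : ℕ) ≤ i + 1)]
          have hx : x = ⟨i + 1, hi⟩ := Fin.ext h2
          rw [hx, Equiv.swap_apply_right]
          exact Fin.ext (by simp)
        · rw [if_neg h0, if_neg h0, if_neg h1,
            if_neg (by omega : ¬ (x : ℕ) ≤ i + 1)]
          apply Equiv.swap_apply_of_ne_of_ne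
          · intro h; have := congrArg Fin.val h; simp only [] at this; omega
          · intro h; have := congrArg Fin.val h; simp only [] at this; omega

lemma t_charge : ∀ {i : ℕ} (hi : i < n) (x : Fin n),
    (t i : GenPerm m n).c x = if (x : ℕ) = 0 then 1 else 0 := by
  intro i
  induction i with
  | zero =>
    intro hi x
    rw [t_zero, s_zero hi]
    simp only []
    congr 1
    · simp [Fin.ext_iff]
  | succ i ih =>
    intro hi x
    have hi' : i < n := by omega
    rw [t_succ, mul_c, s_succ hi, ih hi']
    simp

lemma pow_fix {i : ℕ} (hi : i < n) (k : ℕ) (x : Fin n) (hx : i < (x : ℕ)) :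
    ((t i : GenPerm m n) ^ k).σ x = x ∧ ((t i : GenPerm m n) ^ k).c x = 0 := by
  induction k with
  | zero => simp
  | succ k ihk =>
    rw [pow_succ]
    have hσ : (t i : GenPerm m n).σ x = x := by
      rw [t_sigma hi]
      rw [if_neg (by omega), if_neg (by omega)]
    have hc : (t i : GenPerm m n).c x = 0 := by
      rw [t_charge hi, if_neg (by omega)]
    constructor
    · rw [mul_σ, Equiv.Perm.mul_apply, hσ, ihk.1]
    · rw [mul_c, hσ, ihk.2, hc, add_zero]

lemma pow_apply {i : ℕ} (hi : i < n) (k : ℕ) :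
    ((t i : GenPerm m n) ^ k).σ ⟨i, hi⟩ = ⟨i - k % (i + 1), by omega⟩ ∧
    ((t i : GenPerm m n) ^ k).c ⟨i, hi⟩ = ((k / (i + 1) : ℕ) : ZMod m) := by
  induction k with
  | zero => simp
  | succ k ihk =>
    rw [pow_succ']
    set r := k % (i + 1) with hr
    set q := k / (i + 1) with hq
    have hrlt : r < i + 1 := Nat.mod_lt _ (by omega)
    have hdm : (i + 1) * q + r = k := Nat.div_add_mod k (i + 1)
    by_cases hcase : r = i
    · have hk1 : k + 1 = (i + 1) * (q + 1) := by rw [Nat.mul_succ]; omega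
      have hmod : (k + 1) % (i + 1) = 0 := by rw [hk1]; exact Nat.mul_mod_right _ _
      have hdiv : (k + 1) / (i + 1) = q + 1 := by
        rw [hk1]; exact Nat.mul_div_cancel_left _ (by omega)
      constructor
      · rw [mul_σ, Equiv.Perm.mul_apply, ihk.1, t_sigma hi,
          if_pos (by omega : (i - r : ℕ) = 0)]
        apply Fin.ext; simp [hmod]
      · rw [mul_c, ihk.1, ihk.2, t_charge hi, if_pos (by omega : (i - r : ℕ) = 0), hdiv]
        push_cast
        ring
    · have hk1 : k + 1 = (r + 1) + (i + 1) * q := by omega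
      have hmod : (k + 1) % (i + 1) = r + 1 := by
        rw [hk1, Nat.add_mul_mod_self_left, Nat.mod_eq_of_lt (by omega)]
      have hdiv : (k + 1) / (i + 1) = q := by
        rw [hk1, Nat.add_mul_div_left _ _ (by omega : 0 < i + 1),
          Nat.div_eq_of_lt (by omega), Nat.zero_add]
      constructor
      · rw [mul_σ, Equiv.Perm.mul_apply, ihk.1, t_sigma hi,
          if_neg (by omega : ¬ (i - r : ℕ) = 0), if_pos (by omega : (i - r : ℕ) ≤ i)]
        apply Fin.ext; simp [hmod]; omega
      · rw [mul_c, ihk.1, ihk.2, t_charge hi, if_neg (by omega : ¬ (i - r : ℕ) = 0), hdiv]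
        rw [zero_add]

/-- Partial canonical product `t (j-1) ^ k (j-1) * ⋯ * t 0 ^ k 0`. -/
def T (j : ℕ) (k : ℕ → ℕ) : GenPerm m n :=
  ((List.range j).map (fun i => (t i : GenPerm m n) ^ k i)).reverse.prod

lemma T_zero (k : ℕ → ℕ) : (T 0 k : GenPerm m n) = 1 := rfl

lemma T_succ (j : ℕ) (k : ℕ → ℕ) :
    (T (j + 1) k : GenPerm m n) = (t j : GenPerm m n) ^ k j * T j k := by
  unfold T
  rw [List.range_succ]
  simp

lemma T_congr {j : ℕ} {k k' : ℕ → ℕ} (h : ∀ i < j, k i = k' i) :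
    (T j k : GenPerm m n) = T j k' := by
  induction j with
  | zero => rfl
  | succ j ihj =>
    rw [T_succ, T_succ, h j (by omega), ihj (fun i hi => h i (by omega))]

lemma T_fix : ∀ (j : ℕ), j ≤ n → ∀ (k : ℕ → ℕ) (x : Fin n), j ≤ (x : ℕ) →
    (T j k : GenPerm m n).σ x = x ∧ (T j k : GenPerm m n).c x = 0 := by
  intro j
  induction j with
  | zero => intro _ k x _; simp [T_zero]
  | succ j ihj =>
    intro hj k x hx
    have hj' : j < n := by omega
    have ih := ihj (by omega) k x (by omega)
    have hp := pow_fix (m := m) hj' (k j) x (by omega)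
    rw [T_succ]
    constructor
    · rw [mul_σ, Equiv.Perm.mul_apply, ih.1, hp.1]
    · rw [mul_c, ih.1, ih.2, hp.2, add_zero]

lemma unique_T [NeZero m] : ∀ (j : ℕ), j ≤ n → ∀ (k k' : ℕ → ℕ),
    (∀ i < j, k i < m * (i + 1)) → (∀ i < j, k' i < m * (i + 1)) →
    (T j k : GenPerm m n) = T j k' → ∀ i < j, k i = k' i := by
  intro j
  induction j with
  | zero => intro _ _ _ _ _ _ i hi; omega
  | succ j ihj =>
    intro hj k k' hk hk' h
    have hjn : j < n := by omega
    have hfix := T_fix (m := m) j (by omega : j ≤ n) k ⟨j, hjn⟩ (le_refl j)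
    have hfix' := T_fix (m := m) j (by omega : j ≤ n) k' ⟨j, hjn⟩ (le_refl j)
    have e1 : ((t j : GenPerm m n) ^ k j).σ ⟨j, hjn⟩ =
        ((t j : GenPerm m n) ^ k' j).σ ⟨j, hjn⟩ := by
      have := congrArg (fun g : GenPerm m n => g.σ ⟨j, hjn⟩) h
      simpa [T_succ, Equiv.Perm.mul_apply, hfix.1, hfix'.1] using this
    have e2 : ((t j : GenPerm m n) ^ k j).c ⟨j, hjn⟩ =
        ((t j : GenPerm m n) ^ k' j).c ⟨j, hjn⟩ := by
      have := congrArg (fun g : GenPerm m n => g.c ⟨j, hjn⟩) h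
      simpa [T_succ, hfix.1, hfix.2, hfix'.1, hfix'.2] using this
    rw [(pow_apply (m := m) hjn (k j)).1, (pow_apply (m := m) hjn (k' j)).1] at e1
    rw [(pow_apply (m := m) hjn (k j)).2, (pow_apply (m := m) hjn (k' j)).2] at e2
    have hr1 : k j % (j + 1) < j + 1 := Nat.mod_lt _ (by omega)
    have hr2 : k' j % (j + 1) < j + 1 := Nat.mod_lt _ (by omega)
    have hrr : k j % (j + 1) = k' j % (j + 1) := by
      have := congrArg Fin.val e1
      simp only at this
      omega
    have hq1 : k j / (j + 1) < m := by
      rw [Nat.div_lt_iff_lt_mul (by omega : 0 < j + 1)]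
      have := hk j (by omega); omega
    have hq2 : k' j / (j + 1) < m := by
      rw [Nat.div_lt_iff_lt_mul (by omega : 0 < j + 1)]
      have := hk' j (by omega); omega
    have hqq : k j / (j + 1) = k' j / (j + 1) := by
      have := congrArg ZMod.val e2
      rwa [ZMod.val_cast_of_lt hq1, ZMod.val_cast_of_lt hq2] at this
    have hkk : k j = k' j := by
      have d1 := Nat.div_add_mod (k j) (j + 1)
      have d2 := Nat.div_add_mod (k' j) (j + 1)
      have : (j + 1) * (k j / (j + 1)) = (j + 1) * (k' j / (j + 1)) := by rw [hqq]
      omega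
    have hT : (T j k : GenPerm m n) = T j k' := by
      rw [T_succ, T_succ, hkk] at h
      exact mul_left_cancel h
    intro i hi
    rcases Nat.lt_or_ge i j with h' | h'
    · exact ihj (by omega) k k' (fun i hi => hk i (by omega))
        (fun i hi => hk' i (by omega)) hT i h'
    · have : i = j := by omega
      rw [this]; exact hkk

lemma exists_T [NeZero m] : ∀ (j : ℕ), j ≤ n → ∀ (π : GenPerm m n),
    (∀ x : Fin n, j ≤ (x : ℕ) → π.σ x = x ∧ π.c x = 0) →
    ∃ k : ℕ → ℕ, (∀ i < j, k i < m * (i + 1)) ∧ π = T j k := by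
  intro j
  induction j with
  | zero =>
    intro _ π hπ
    refine ⟨fun _ => 0, fun i hi => by omega, ?_⟩
    rw [T_zero]
    refine GenPerm.ext ?_ ?_
    · exact Equiv.ext fun x => by simpa using (hπ x (Nat.zero_le _)).1
    · funext x; simpa using (hπ x (Nat.zero_le _)).2
  | succ j ihj =>
    intro hj π hπ
    have hjn : j < n := by omega
    set a := π.σ ⟨j, hjn⟩ with ha_def
    have ha : (a : ℕ) ≤ j := by
      by_contra h'
      have h1 : π.σ a = a := (hπ a (by omega)).1
      have : a = (⟨j, hjn⟩ : Fin n) := π.σ.injective (by rw [h1, ← ha_def])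
      have := congrArg Fin.val this
      simp at this; omega
    set v := π.c ⟨j, hjn⟩ with hv_def
    set kj := v.val * (j + 1) + (j - (a : ℕ)) with hkj_def
    have hvm : v.val < m := ZMod.val_lt v
    have hkjm : kj < m * (j + 1) := by
      have h2 : (v.val + 1) * (j + 1) ≤ m * (j + 1) :=
        Nat.mul_le_mul_right _ (by omega)
      have h3 : (v.val + 1) * (j + 1) = v.val * (j + 1) + (j + 1) := by ring
      omega
    have hmod : kj % (j + 1) = j - (a : ℕ) := by
      have : kj = (j - (a : ℕ)) + (j + 1) * v.val := by rw [hkj_def]; ring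
      rw [this, Nat.add_mul_mod_self_left, Nat.mod_eq_of_lt (by omega)]
    have hdiv : kj / (j + 1) = v.val := by
      have : kj = (j - (a : ℕ)) + (j + 1) * v.val := by rw [hkj_def]; ring
      rw [this, Nat.add_mul_div_left _ _ (by omega : 0 < j + 1),
        Nat.div_eq_of_lt (by omega), Nat.zero_add]
    set g := (t j : GenPerm m n) ^ kj with hg_def
    have hgσ : g.σ ⟨j, hjn⟩ = a := by
      rw [hg_def, (pow_apply (m := m) hjn kj).1]
      apply Fin.ext; simp [hmod]; omega
    have hgc : g.c ⟨j, hjn⟩ = v := by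
      rw [hg_def, (pow_apply (m := m) hjn kj).2, hdiv, ZMod.natCast_val, ZMod.cast_id]
    set π' := g⁻¹ * π with hπ'_def
    have hπ' : ∀ x : Fin n, j ≤ (x : ℕ) → π'.σ x = x ∧ π'.c x = 0 := by
      intro x hx
      rcases Nat.eq_or_lt_of_le hx with heq | hlt
      · have hxj : x = ⟨j, hjn⟩ := Fin.ext heq.symm
        subst hxj
        have hσ : π'.σ ⟨j, hjn⟩ = ⟨j, hjn⟩ := by
          rw [hπ'_def, mul_σ, Equiv.Perm.mul_apply, inv_σ, ← ha_def, ← hgσ,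
            ← Equiv.Perm.mul_apply, inv_mul_cancel, Equiv.Perm.one_apply]
        refine ⟨hσ, ?_⟩
        rw [hπ'_def, mul_c, inv_c, ← ha_def, ← hv_def, ← hgσ,
          ← Equiv.Perm.mul_apply, inv_mul_cancel, Equiv.Perm.one_apply, hgc, neg_add_cancel]
      · have h1 := hπ x (by omega)
        have h2 := pow_fix (m := m) hjn kj x hlt
        have hinv : g.σ⁻¹ x = x := by
          conv_lhs => rw [← h2.1]
          rw [← Equiv.Perm.mul_apply, inv_mul_cancel, Equiv.Perm.one_apply]
        constructor
        · rw [hπ'_def, mul_σ, Equiv.Perm.mul_apply, inv_σ, h1.1, hinv]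
        · rw [hπ'_def, mul_c, inv_c, h1.1, hinv, h2.2, h1.2, neg_zero, add_zero]
    obtain ⟨k', hbox', hrep'⟩ := ihj (by omega) π' hπ'
    refine ⟨Function.update k' j kj, ?_, ?_⟩
    · intro i hi
      rcases Nat.lt_or_ge i j with h' | h'
      · rw [Function.update_of_ne (by omega)]
        exact hbox' i h'
      · have : i = j := by omega
        subst this
        rw [Function.update_self]
        exact hkjm
    · have hcong : (T j (Function.update k' j kj) : GenPerm m n) = T j k' :=
        T_congr (fun i hi => Function.update_of_ne (Nat.ne_of_lt hi) kj k')
      rw [T_succ, Function.update_self, hcong, ← hrep', hπ'_def, mul_inv_cancel_left]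

lemma rep_eq_T (k : Fin n → ℕ) :
    (rep k : GenPerm m n) = T n (fun i => if h : i < n then k ⟨i, h⟩ else 0) := by
  unfold rep T
  congr 1
  congr 1
  apply List.ext_get
  · simp
  · intro i h1 h2
    simp only [List.get_eq_getElem, List.getElem_ofFn, List.getElem_map,
      List.getElem_range]
    have hi : i < n := by simpa using h1
    rw [dif_pos hi]

/-- every element of `C_m ≀ S_n` has a unique representation
`π = t_{n-1}^{k_{n-1}} ⋯ t_1^{k_1} t_0^{k_0}` with `0 ≤ k_i < m(i+1)`. -/
theorem unique_flag_decomposition (m n : ℕ) (hm : 0 < m) (π : GenPerm m n) :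
    ∃! k : Fin n → ℕ, (∀ i : Fin n, k i < m * ((i : ℕ) + 1)) ∧ π = rep k := by
  haveI : NeZero m := ⟨hm.ne'⟩
  obtain ⟨k, hbox, hrep⟩ := exists_T (m := m) n (le_refl n) π
    (fun x hx => absurd x.isLt (by omega))
  refine ⟨fun i => k (i : ℕ), ⟨fun i => hbox (i : ℕ) i.isLt, ?_⟩, ?_⟩
  · rw [rep_eq_T, hrep]
    exact T_congr (fun i hi => by simp [hi])
  · rintro k₂ ⟨hb2, he2⟩
    funext i
    have h1 : (T n (fun j => if h : j < n then k₂ ⟨j, h⟩ else 0) : GenPerm m n)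
        = T n (fun j => if h : j < n then k ((⟨j, h⟩ : Fin n) : ℕ) else 0) := by
      rw [← rep_eq_T (m := m) k₂, ← he2, hrep]
      exact T_congr (fun i hi => by simp [hi])
    have h2 := unique_T (m := m) n (le_refl n) _ _
      (fun i hi => by simpa [hi] using hb2 ⟨i, hi⟩)
      (fun i hi => by simpa [hi] using hbox i hi)
      h1 (i : ℕ) i.isLt
    simpa [i.isLt] using h2

end GenPerm
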